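/- arXiv:1903.07752 — 3 statements merged into one kernel-verified Lean document; each statement's English description precedes it below -/
import Mathlib

section
/- Assume there exists π̄ ∈ Ξ with f_{φ^0}(π̄) = inf_{π ∈ Ξ} f_{φ^0}(π) and ξ^π̄(s,a) < ∞ for every s ∈ S_r and a ∈ A(s). Then for every ε̄ > 0 there exists ε > 0 such that inf_{π ∈ Ξ} f_{φ^ε}(π) ≤ inf_{π ∈ Ξ} f_{φ^0}(π) + ε̄ (Theorem 1: ε̄-optimality of the perturbed incentive-cost minimization). -/
set_option maxHeartbeats 800000


open scoped ENNReal

section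

variable {S A : Type} [Fintype S] [Fintype A] [DecidableEq S] [DecidableEq A]

/-- A policy: a sequence of decision rules, each supported on the available actions. -/
def IsPolicy (avail : S → Finset A) (π : ℕ → S → A → ℝ) : Prop :=
  ∀ t s, (∀ a, 0 ≤ π t s a) ∧ (∀ a, a ∉ avail s → π t s a = 0) ∧
    (∑ a ∈ avail s, π t s a) = 1

/-- A stationary policy uses the same decision rule at every stage. -/
def IsStationaryPolicy (π : ℕ → S → A → ℝ) : Prop := ∀ t, π t = π 0

/-- Occupancy measures: `occ P avail init π t s a` is `μ^π_{t+1}(s,a)` (stages indexed from 1). -/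
def occ (P : S → A → S → ℝ) (avail : S → Finset A) (init : S)
    (π : ℕ → S → A → ℝ) : ℕ → S → A → ℝ
  | 0 => fun s a => if s = init then π 0 s a else 0
  | t + 1 => fun s' a' =>
      π (t + 1) s' a' * ∑ s : S, ∑ a ∈ avail s, P s a s' * occ P avail init π t s a

/-- Expected residence time `ξ^π(s,a) ∈ [0,∞]`. -/
noncomputable def resTime (P : S → A → S → ℝ) (avail : S → Finset A) (init : S)
    (π : ℕ → S → A → ℝ) (s : S) (a : A) : ℝ≥0∞ :=
  ∑' t : ℕ, ENNReal.ofReal (occ P avail init π t s a)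

/-- Probability of reaching the absorbing set `B`. -/
noncomputable def reachProb (P : S → A → S → ℝ) (avail : S → Finset A) (B : Finset S)
    (init : S) (π : ℕ → S → A → ℝ) : ℝ≥0∞ :=
  ⨆ t : ℕ, ∑ s ∈ B, ∑ a ∈ avail s, ENNReal.ofReal (occ P avail init π t s a)

/-- `x*_s`: optimal probability of reaching `B` starting from `s`. -/
noncomputable def xstar (P : S → A → S → ℝ) (avail : S → Finset A) (B : Finset S)
    (s : S) : ℝ≥0∞ :=
  ⨆ π : {π : ℕ → S → A → ℝ // IsPolicy avail π}, reachProb P avail B s π.1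

/-- A state is absorbing if every available action loops on it with probability 1. -/
def Absorbing (P : S → A → S → ℝ) (avail : S → Finset A) (s : S) : Prop :=
  ∀ a ∈ avail s, P s a s = 1

/-- Expected total cost `f_c(π) ∈ [0,∞]`. -/
noncomputable def totalCost (P : S → A → S → ℝ) (avail : S → Finset A) (init : S)
    (c : S → A → ℝ) (π : ℕ → S → A → ℝ) : ℝ≥0∞ :=
  ∑ s : S, ∑ a ∈ avail s, resTime P avail init π s a * ENNReal.ofReal (c s a)


open scoped Classical in
/-- The perturbed cost `φ^ε`: `c(s,a) + ε` on `S_r`, and `0` on `B ∪ S_0`. -/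
noncomputable def phiPert (P : S → A → S → ℝ) (avail : S → Finset A) (B : Finset S)
    (c : S → A → ℝ) (ε : ℝ) (s : S) (a : A) : ℝ :=
  if s ∈ B ∨ xstar P avail B s = 0 then 0 else c s a + ε

/-- **Theorem 1** (ε̄-optimality of the perturbed incentive-cost minimization). -/
theorem perturbed_cost_epsilon_optimality
    (P : S → A → S → ℝ) (avail : S → Finset A) (s0 : S) (B : Finset S)
    (havail : ∀ s, (avail s).Nonempty)
    (hP0 : ∀ s a s', 0 ≤ P s a s')
    (hP1 : ∀ s, ∀ a ∈ avail s, (∑ s' : S, P s a s') = 1)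
    (habs : ∀ s : S, (s ∈ B ∨ xstar P avail B s = 0) → Absorbing P avail s)
    (hs0B : s0 ∉ B) (hs0r : xstar P avail B s0 ≠ 0)
    (c : S → A → ℝ)
    (hc0 : ∀ s a, 0 ≤ c s a)
    (hcz : ∀ s a, (s ∈ B ∨ xstar P avail B s = 0) → c s a = 0)
    (hbar : ∃ π : ℕ → S → A → ℝ, IsPolicy avail π ∧
      reachProb P avail B s0 π = xstar P avail B s0 ∧
      totalCost P avail s0 (phiPert P avail B c 0) π =
        (⨅ π' : {π' : ℕ → S → A → ℝ //
            IsPolicy avail π' ∧ reachProb P avail B s0 π' = xstar P avail B s0},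
          totalCost P avail s0 (phiPert P avail B c 0) π'.1) ∧
      ∀ s, s ∉ B → xstar P avail B s ≠ 0 → ∀ a ∈ avail s,
        resTime P avail s0 π s a < ⊤) :
    ∀ εbar : ℝ, 0 < εbar → ∃ ε : ℝ, 0 < ε ∧
      (⨅ π' : {π' : ℕ → S → A → ℝ //
          IsPolicy avail π' ∧ reachProb P avail B s0 π' = xstar P avail B s0},
        totalCost P avail s0 (phiPert P avail B c ε) π'.1) ≤
      (⨅ π' : {π' : ℕ → S → A → ℝ //
          IsPolicy avail π' ∧ reachProb P avail B s0 π' = xstar P avail B s0},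
        totalCost P avail s0 (phiPert P avail B c 0) π'.1) + ENNReal.ofReal εbar := by
  classical
  intro εbar hεbar
  obtain ⟨πb, hpol, hreach, hopt, hfin⟩ := hbar
  set M : ℝ≥0∞ := ∑ s : S, ∑ a ∈ avail s,
      (if s ∈ B ∨ xstar P avail B s = 0 then 0 else resTime P avail s0 πb s a) with hM
  have hMfin : M ≠ ⊤ := by
    rw [hM]
    refine (ENNReal.sum_lt_top.2 fun s _ => ENNReal.sum_lt_top.2 fun a ha => ?_).ne
    by_cases hs : s ∈ B ∨ xstar P avail B s = 0
    · simp [hs]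
    · push_neg at hs
      simpa [hs.1, hs.2] using hfin s hs.1 hs.2 a ha
  set ε : ℝ := εbar / (M.toReal + 1) with hε
  have hMReal : 0 ≤ M.toReal := ENNReal.toReal_nonneg
  have hden : (0:ℝ) < M.toReal + 1 := by linarith
  have hεpos : 0 < ε := div_pos hεbar hden
  refine ⟨ε, hεpos, ?_⟩
  have key : totalCost P avail s0 (phiPert P avail B c ε) πb ≤
      totalCost P avail s0 (phiPert P avail B c 0) πb + ENNReal.ofReal ε * M := by
    unfold totalCost
    rw [hM, Finset.mul_sum]
    simp_rw [Finset.mul_sum, ← Finset.sum_add_distrib]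
    refine Finset.sum_le_sum fun s _ => Finset.sum_le_sum fun a _ => ?_
    by_cases hs : s ∈ B ∨ xstar P avail B s = 0
    · simp [phiPert, hs]
    · have hc := hc0 s a
      simp only [phiPert, if_neg hs]
      rw [ENNReal.ofReal_add hc hεpos.le, add_zero, mul_add, mul_comm _ (ENNReal.ofReal ε)]
  have hinf_le : (⨅ π' : {π' : ℕ → S → A → ℝ //
          IsPolicy avail π' ∧ reachProb P avail B s0 π' = xstar P avail B s0},
        totalCost P avail s0 (phiPert P avail B c ε) π'.1) ≤
      totalCost P avail s0 (phiPert P avail B c ε) πb :=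
    iInf_le (fun π' : {π' : ℕ → S → A → ℝ //
            IsPolicy avail π' ∧ reachProb P avail B s0 π' = xstar P avail B s0} =>
          totalCost P avail s0 (phiPert P avail B c ε) π'.1) ⟨πb, hpol, hreach⟩
  have hεM : ENNReal.ofReal ε * M ≤ ENNReal.ofReal εbar := by
    have h1 : ε * (M.toReal + 1) = εbar := div_mul_cancel₀ _ hden.ne'
    have h2 : ε * M.toReal ≤ εbar := by nlinarith
    calc ENNReal.ofReal ε * M = ENNReal.ofReal ε * ENNReal.ofReal M.toReal := by
          rw [ENNReal.ofReal_toReal hMfin]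
      _ = ENNReal.ofReal (ε * M.toReal) := (ENNReal.ofReal_mul hεpos.le).symm
      _ ≤ ENNReal.ofReal εbar := ENNReal.ofReal_le_ofReal h2
  calc (⨅ π' : {π' : ℕ → S → A → ℝ //
          IsPolicy avail π' ∧ reachProb P avail B s0 π' = xstar P avail B s0},
        totalCost P avail s0 (phiPert P avail B c ε) π'.1)
      ≤ totalCost P avail s0 (phiPert P avail B c ε) πb := hinf_le
    _ ≤ totalCost P avail s0 (phiPert P avail B c 0) πb + ENNReal.ofReal ε * M := key
    _ ≤ (⨅ π' : {π' : ℕ → S → A → ℝ //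
          IsPolicy avail π' ∧ reachProb P avail B s0 π' = xstar P avail B s0},
        totalCost P avail s0 (phiPert P avail B c 0) π'.1) + ENNReal.ofReal εbar := by
        rw [hopt]; exact add_le_add_right hεM _

end
end

section
/- For every policy π and every s ∈ S_r, the balance equation Σ_{a∈A(s)} ξ^π(s,a) = [s = s0] + Σ_{s'∈S_r} Σ_{a∈A(s')} P(s',a,s) · ξ^π(s',a) holds as an identity in [0,∞], where [s = s0] equals 1 if s = s0 and 0 otherwise. (This is the flow-conservation constraint satisfied by the expected residence times in the paper's linear program.) -/
open scoped ENNReal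

section

variable {S A : Type} [Fintype S] [Fintype A] [DecidableEq S] [DecidableEq A]

/-- **Flow conservation.** For every policy `π` and every non-absorbing state `s ∈ S_r = S \ C`,
`Σ_{a∈A(s)} ξ^π(s,a) = [s = s0] + Σ_{s'∈S_r} Σ_{a∈A(s')} P(s',a,s)·ξ^π(s',a)`,
as an identity in `[0,∞]`. -/
theorem residence_time_balance_equation
    (P : S → A → S → ℝ) (avail : S → Finset A) (s0 : S) (C : Finset S)
    (havail : ∀ s, (avail s).Nonempty)
    (hP0 : ∀ s a s', 0 ≤ P s a s')
    (hP1 : ∀ s, ∀ a ∈ avail s, (∑ s' : S, P s a s') = 1)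
    (habs : ∀ s ∈ C, Absorbing P avail s)
    (hs0 : s0 ∉ C)
    (π : ℕ → S → A → ℝ) (hπ : IsPolicy avail π) :
    ∀ s : S, s ∉ C →
      (∑ a ∈ avail s, resTime P avail s0 π s a) =
        (if s = s0 then 1 else 0) +
          ∑ s' ∈ Finset.univ \ C, ∑ a ∈ avail s',
            ENNReal.ofReal (P s' a s) * resTime P avail s0 π s' a := by
  intro s hs
  have hocc : ∀ t s a, 0 ≤ occ P avail s0 π t s a := by
    intro t
    induction t with
    | zero =>
      intro s a; simp only [occ]
      split
      · exact (hπ 0 s).1 a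
      · exact le_refl 0
    | succ t ih =>
      intro s a; simp only [occ]
      exact mul_nonneg ((hπ (t+1) s).1 a)
        (Finset.sum_nonneg fun s' _ => Finset.sum_nonneg fun a' _ =>
          mul_nonneg (hP0 s' a' s) (ih s' a'))
  have hPzero : ∀ s' ∈ C, ∀ a ∈ avail s', P s' a s = 0 := by
    intro s' hC a ha
    have hne : s ≠ s' := fun h => hs (h ▸ hC)
    have h1 := hP1 s' a ha
    have hself := habs s' hC a ha
    have hsplit := Finset.add_sum_erase Finset.univ (P s' a) (Finset.mem_univ s')
    rw [← hsplit, hself] at h1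
    have hsum : ∑ s'' ∈ Finset.univ.erase s', P s' a s'' = 0 := by linarith
    exact Finset.sum_eq_zero_iff_of_nonneg (fun x _ => hP0 s' a x) |>.mp hsum s
      (Finset.mem_erase.mpr ⟨hne, Finset.mem_univ s⟩)
  -- swap sum over actions and tsum over time
  have hswap : (∑ a ∈ avail s, resTime P avail s0 π s a) =
      ∑' t : ℕ, ∑ a ∈ avail s, ENNReal.ofReal (occ P avail s0 π t s a) := by
    unfold resTime
    exact (Summable.tsum_finsetSum fun a _ => ENNReal.summable).symm
  rw [hswap, tsum_eq_zero_add' ENNReal.summable]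
  -- the t = 0 term
  have h0 : (∑ a ∈ avail s, ENNReal.ofReal (occ P avail s0 π 0 s a)) =
      (if s = s0 then 1 else 0) := by
    simp only [occ]
    by_cases h : s = s0
    · simp only [h, if_pos rfl, if_true]
      rw [← ENNReal.ofReal_sum_of_nonneg (fun a _ => (hπ 0 s0).1 a)]
      rw [(hπ 0 s0).2.2]
      simp
    · simp [h]
  -- the t+1 term
  have hstep : ∀ t : ℕ, (∑ a ∈ avail s, ENNReal.ofReal (occ P avail s0 π (t+1) s a)) =
      ∑ s' ∈ Finset.univ \ C, ∑ a ∈ avail s',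
        ENNReal.ofReal (P s' a s) * ENNReal.ofReal (occ P avail s0 π t s' a) := by
    intro t
    have hXnn : 0 ≤ ∑ s' : S, ∑ a ∈ avail s', P s' a s * occ P avail s0 π t s' a :=
      Finset.sum_nonneg fun s' _ => Finset.sum_nonneg fun a' _ =>
        mul_nonneg (hP0 s' a' s) (hocc t s' a')
    have hterm : ∀ a ∈ avail s, ENNReal.ofReal (occ P avail s0 π (t+1) s a) =
        ENNReal.ofReal (π (t+1) s a) *
          ENNReal.ofReal (∑ s' : S, ∑ a' ∈ avail s', P s' a' s * occ P avail s0 π t s' a') := by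
      intro a _
      simp only [occ]
      exact ENNReal.ofReal_mul ((hπ (t+1) s).1 a)
    rw [Finset.sum_congr rfl hterm, ← Finset.sum_mul,
      ← ENNReal.ofReal_sum_of_nonneg (fun a _ => (hπ (t+1) s).1 a), (hπ (t+1) s).2.2,
      ENNReal.ofReal_one, one_mul]
    rw [ENNReal.ofReal_sum_of_nonneg (fun s' _ =>
      Finset.sum_nonneg fun a' _ => mul_nonneg (hP0 s' a' s) (hocc t s' a'))]
    have hinner : ∀ s' : S, ENNReal.ofReal (∑ a ∈ avail s', P s' a s * occ P avail s0 π t s' a)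
        = ∑ a ∈ avail s', ENNReal.ofReal (P s' a s) * ENNReal.ofReal (occ P avail s0 π t s' a) := by
      intro s'
      rw [ENNReal.ofReal_sum_of_nonneg (fun a _ => mul_nonneg (hP0 s' a s) (hocc t s' a))]
      exact Finset.sum_congr rfl fun a _ => ENNReal.ofReal_mul (hP0 s' a s)
    rw [Finset.sum_congr rfl fun s' _ => hinner s']
    symm
    apply Finset.sum_subset (Finset.sdiff_subset)
    intro s' _ hnot
    have hC' : s' ∈ C := by
      by_contra h
      exact hnot (Finset.mem_sdiff.mpr ⟨Finset.mem_univ s', h⟩)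
    exact Finset.sum_eq_zero fun a ha => by rw [hPzero s' hC' a ha, ENNReal.ofReal_zero, zero_mul]
  rw [h0, tsum_congr hstep]
  congr 1
  rw [Summable.tsum_finsetSum fun s' _ => ENNReal.summable]
  refine Finset.sum_congr rfl fun s' _ => ?_
  rw [Summable.tsum_finsetSum fun a _ => ENNReal.summable]
  refine Finset.sum_congr rfl fun a _ => ?_
  rw [ENNReal.tsum_mul_left]
  rfl

end
end

section
/- For every policy π, Pr^π(◇B) = Σ_{s∈S\B} Σ_{a∈A(s)} ξ^π(s,a) · r(s,a), as an identity in [0,∞]; that is, the probability of reaching the absorbing set B equals the expected total reward accrued when each state–action pair outside B is rewarded by its one-step probability r(s,a) of entering B. -/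
open scoped ENNReal
set_option linter.unusedSectionVars false

section

variable {S A : Type} [Fintype S] [Fintype A] [DecidableEq S] [DecidableEq A]

lemma occ_nonneg (P : S → A → S → ℝ) (avail : S → Finset A) (init : S)
    (π : ℕ → S → A → ℝ) (hP0 : ∀ s a s', 0 ≤ P s a s') (hπ : IsPolicy avail π) :
    ∀ t s a, 0 ≤ occ P avail init π t s a := by
  intro t
  induction t with
  | zero =>
    intro s a
    simp only [occ]
    split
    · exact (hπ 0 s).1 a
    · exact le_refl 0
  | succ t ih =>
    intro s a
    exact mul_nonneg ((hπ (t+1) s).1 a)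
      (Finset.sum_nonneg fun s' _ => Finset.sum_nonneg fun a' _ =>
        mul_nonneg (hP0 _ _ _) (ih s' a'))

lemma P_absorb_zero (P : S → A → S → ℝ) (avail : S → Finset A) (B : Finset S)
    (hP0 : ∀ s a s', 0 ≤ P s a s')
    (hP1 : ∀ s, ∀ a ∈ avail s, (∑ s' : S, P s a s') = 1)
    (habs : ∀ s ∈ B, Absorbing P avail s)
    {s : S} (hs : s ∈ B) {a : A} (ha : a ∈ avail s) {s' : S} (hne : s' ≠ s) :
    P s a s' = 0 := by
  have h1 := hP1 s a ha
  have hsplit : (∑ x : S, P s a x) = P s a s + ∑ x ∈ Finset.univ \ {s}, P s a x := by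
    rw [add_comm, Finset.sum_sdiff_eq_sub (Finset.subset_univ _), Finset.sum_singleton]
    ring
  have habs' := habs s hs a ha
  have hzero : ∑ x ∈ Finset.univ \ {s}, P s a x = 0 := by
    rw [hsplit, habs'] at h1; linarith
  have := (Finset.sum_eq_zero_iff_of_nonneg (fun x _ => hP0 s a x)).1 hzero s'
  exact this (by simp [hne])

lemma sum_B_P_eq_one (P : S → A → S → ℝ) (avail : S → Finset A) (B : Finset S)
    (hP0 : ∀ s a s', 0 ≤ P s a s')
    (hP1 : ∀ s, ∀ a ∈ avail s, (∑ s' : S, P s a s') = 1)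
    (habs : ∀ s ∈ B, Absorbing P avail s)
    {s : S} (hs : s ∈ B) {a : A} (ha : a ∈ avail s) :
    (∑ s' ∈ B, P s a s') = 1 := by
  rw [Finset.sum_eq_single_of_mem s hs
    (fun s' _ hne => P_absorb_zero P avail B hP0 hP1 habs hs ha hne)]
  exact habs s hs a ha

/-- one-step balance: mass in `B` increases by exactly the reward collected outside `B`. -/
lemma mass_step (P : S → A → S → ℝ) (avail : S → Finset A) (init : S) (B : Finset S)
    (hP0 : ∀ s a s', 0 ≤ P s a s')
    (hP1 : ∀ s, ∀ a ∈ avail s, (∑ s' : S, P s a s') = 1)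
    (habs : ∀ s ∈ B, Absorbing P avail s)
    (π : ℕ → S → A → ℝ) (hπ : IsPolicy avail π) (t : ℕ) :
    (∑ s ∈ B, ∑ a ∈ avail s, occ P avail init π (t+1) s a)
      = (∑ s ∈ B, ∑ a ∈ avail s, occ P avail init π t s a)
        + ∑ s ∈ Finset.univ \ B, ∑ a ∈ avail s,
            occ P avail init π t s a * (∑ s' ∈ B, P s a s') := by
  have h1 : (∑ s' ∈ B, ∑ a' ∈ avail s', occ P avail init π (t+1) s' a')
      = ∑ s' ∈ B, ∑ s : S, ∑ a ∈ avail s, P s a s' * occ P avail init π t s a := by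
    refine Finset.sum_congr rfl fun s' _ => ?_
    simp only [occ]
    rw [← Finset.sum_mul, (hπ (t+1) s').2.2, one_mul]
  rw [h1]
  have h2 : ∀ s' : S, (∑ s : S, ∑ a ∈ avail s, P s a s' * occ P avail init π t s a)
      = (∑ s ∈ B, ∑ a ∈ avail s, P s a s' * occ P avail init π t s a)
        + ∑ s ∈ Finset.univ \ B, ∑ a ∈ avail s, P s a s' * occ P avail init π t s a := by
    intro s'
    rw [add_comm, Finset.sum_sdiff (Finset.subset_univ B)]
  simp only [h2, Finset.sum_add_distrib]
  congr 1
  · rw [Finset.sum_comm]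
    refine Finset.sum_congr rfl fun s hs => ?_
    rw [Finset.sum_comm]
    refine Finset.sum_congr rfl fun a ha => ?_
    rw [← Finset.sum_mul, sum_B_P_eq_one P avail B hP0 hP1 habs hs ha, one_mul]
  · rw [Finset.sum_comm]
    refine Finset.sum_congr rfl fun s hs => ?_
    rw [Finset.sum_comm]
    refine Finset.sum_congr rfl fun a ha => ?_
    rw [← Finset.sum_mul, mul_comm]

lemma mass_eq_partial (P : S → A → S → ℝ) (avail : S → Finset A) (s0 : S) (B : Finset S)
    (hP0 : ∀ s a s', 0 ≤ P s a s')
    (hP1 : ∀ s, ∀ a ∈ avail s, (∑ s' : S, P s a s') = 1)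
    (habs : ∀ s ∈ B, Absorbing P avail s) (hs0 : s0 ∉ B)
    (π : ℕ → S → A → ℝ) (hπ : IsPolicy avail π) (t : ℕ) :
    (∑ s ∈ B, ∑ a ∈ avail s, occ P avail s0 π t s a)
      = ∑ u ∈ Finset.range t, ∑ s ∈ Finset.univ \ B, ∑ a ∈ avail s,
          occ P avail s0 π u s a * (∑ s' ∈ B, P s a s') := by
  induction t with
  | zero =>
    simp only [Finset.range_zero, Finset.sum_empty]
    refine Finset.sum_eq_zero fun s hs => Finset.sum_eq_zero fun a _ => ?_
    simp only [occ]
    rw [if_neg]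
    rintro rfl
    exact hs0 hs
  | succ t ih =>
    rw [mass_step P avail s0 B hP0 hP1 habs π hπ t, ih, Finset.sum_range_succ]

/-- The probability of reaching the absorbing set `B` equals the expected total reward when
each state–action pair outside `B` is rewarded by its one-step probability
`r(s,a) = Σ_{s'∈B} P(s,a,s')` of entering `B`:
`Pr^π(◇B) = Σ_{s∈S\B} Σ_{a∈A(s)} ξ^π(s,a)·r(s,a)`, as an identity in `[0,∞]`. -/
theorem reachProb_eq_expected_total_reward
    (P : S → A → S → ℝ) (avail : S → Finset A) (s0 : S) (B : Finset S)
    (havail : ∀ s, (avail s).Nonempty)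
    (hP0 : ∀ s a s', 0 ≤ P s a s')
    (hP1 : ∀ s, ∀ a ∈ avail s, (∑ s' : S, P s a s') = 1)
    (habs : ∀ s ∈ B, Absorbing P avail s)
    (hs0 : s0 ∉ B)
    (π : ℕ → S → A → ℝ) (hπ : IsPolicy avail π) :
    reachProb P avail B s0 π =
      ∑ s ∈ Finset.univ \ B, ∑ a ∈ avail s,
        resTime P avail s0 π s a * ENNReal.ofReal (∑ s' ∈ B, P s a s') := by
  have hocc := occ_nonneg P avail s0 π hP0 hπ
  have hr : ∀ s a, 0 ≤ ∑ s' ∈ B, P s a s' :=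
    fun s a => Finset.sum_nonneg fun s' _ => hP0 s a s'
  -- rewrite RHS as a tsum of reward terms
  have hRHS : (∑ s ∈ Finset.univ \ B, ∑ a ∈ avail s,
        resTime P avail s0 π s a * ENNReal.ofReal (∑ s' ∈ B, P s a s'))
      = ∑' t : ℕ, ENNReal.ofReal (∑ s ∈ Finset.univ \ B, ∑ a ∈ avail s,
          occ P avail s0 π t s a * (∑ s' ∈ B, P s a s')) := by
    have step1 : ∀ s a, resTime P avail s0 π s a * ENNReal.ofReal (∑ s' ∈ B, P s a s')
        = ∑' t : ℕ, ENNReal.ofReal (occ P avail s0 π t s a * (∑ s' ∈ B, P s a s')) := by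
      intro s a
      rw [resTime, ← ENNReal.tsum_mul_right]
      exact tsum_congr fun t => (ENNReal.ofReal_mul (hocc t s a)).symm
    simp only [step1]
    have hofr : ∀ t : ℕ, ENNReal.ofReal (∑ s ∈ Finset.univ \ B, ∑ a ∈ avail s,
          occ P avail s0 π t s a * (∑ s' ∈ B, P s a s'))
        = ∑ s ∈ Finset.univ \ B, ∑ a ∈ avail s,
            ENNReal.ofReal (occ P avail s0 π t s a * (∑ s' ∈ B, P s a s')) := by
      intro t
      rw [ENNReal.ofReal_sum_of_nonneg
        (fun s _ => Finset.sum_nonneg fun a _ => mul_nonneg (hocc t s a) (hr s a))]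
      exact Finset.sum_congr rfl fun s _ =>
        ENNReal.ofReal_sum_of_nonneg (fun a _ => mul_nonneg (hocc t s a) (hr s a))
    refine Eq.symm ?_
    rw [tsum_congr hofr, Summable.tsum_finsetSum (fun s _ => ENNReal.summable)]
    exact Finset.sum_congr rfl fun s _ => Summable.tsum_finsetSum (fun a _ => ENNReal.summable)
  rw [hRHS, ENNReal.tsum_eq_iSup_nat]
  unfold reachProb
  refine iSup_congr fun t => ?_
  have hL : (∑ s ∈ B, ∑ a ∈ avail s, ENNReal.ofReal (occ P avail s0 π t s a))
      = ENNReal.ofReal (∑ s ∈ B, ∑ a ∈ avail s, occ P avail s0 π t s a) := by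
    rw [ENNReal.ofReal_sum_of_nonneg (fun s _ => Finset.sum_nonneg fun a _ => hocc t s a)]
    exact Finset.sum_congr rfl fun s _ =>
      (ENNReal.ofReal_sum_of_nonneg (fun a _ => hocc t s a)).symm
  rw [hL, mass_eq_partial P avail s0 B hP0 hP1 habs hs0 π hπ t,
    ENNReal.ofReal_sum_of_nonneg (fun u _ => Finset.sum_nonneg fun s _ =>
      Finset.sum_nonneg fun a _ => mul_nonneg (hocc u s a) (hr s a))]

end
end
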